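/- Let u₁, u₂, g ∈ ℝⁿ, let y₁, y₂ ≥ 0 with y₁ + y₂ = 1, let ū = y₁u₁ + y₂u₂, let T₁, T₂ > 0 and B ≥ 0. Define the interfacial viscous stress as the rank-one operator τ_I(v) = B⟨g, v⟩(u₁ − u₂) (i.e., τ_I = B(u₁ − u₂) ⊗ g, where g plays the role of ∇α₁), and set g₁ = g, g₂ = −g (the volume fraction gradients, with ∇α₂ = −∇α₁). Then the entropy production due to the interfacial stress satisfies (1/T₁)⟨u₁ − ū, τ_I(g₁)⟩ + (1/T₂)⟨u₂ − ū, τ_I(g₂)⟩ = B‖g‖²(y₂/T₁ + y₁/T₂)‖u₁ − u₂‖² ≥ 0. -/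

import Mathlib

/-- Entropy production due to the interfacial viscous stress
`τ_I = B(u₁ − u₂) ⊗ g` is `B‖g‖²(y₂/T₁ + y₁/T₂)‖u₁ − u₂‖² ≥ 0`. -/
theorem interfacial_stress_entropy_production {n : ℕ}
    (u₁ u₂ g : EuclideanSpace ℝ (Fin n))
    (y₁ y₂ : ℝ) (hy₁ : 0 ≤ y₁) (hy₂ : 0 ≤ y₂) (hy : y₁ + y₂ = 1)
    (ub : EuclideanSpace ℝ (Fin n)) (hub : ub = y₁ • u₁ + y₂ • u₂)
    (T₁ T₂ B : ℝ) (hT₁ : 0 < T₁) (hT₂ : 0 < T₂) (hB : 0 ≤ B)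
    (τI : EuclideanSpace ℝ (Fin n) → EuclideanSpace ℝ (Fin n))
    (hτI : ∀ v, τI v = (B * (inner ℝ g v : ℝ)) • (u₁ - u₂))
    (g₁ g₂ : EuclideanSpace ℝ (Fin n)) (hg₁ : g₁ = g) (hg₂ : g₂ = -g) :
    (1 / T₁) * (inner ℝ (u₁ - ub) (τI g₁) : ℝ)
        + (1 / T₂) * (inner ℝ (u₂ - ub) (τI g₂) : ℝ)
      = B * ‖g‖ ^ 2 * (y₂ / T₁ + y₁ / T₂) * ‖u₁ - u₂‖ ^ 2
    ∧ 0 ≤ B * ‖g‖ ^ 2 * (y₂ / T₁ + y₁ / T₂) * ‖u₁ - u₂‖ ^ 2 := by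
  have hy' : y₁ = 1 - y₂ := by linarith
  subst hy'
  constructor
  · have h1 : u₁ - ub = y₂ • (u₁ - u₂) := by
      rw [hub]
      module
    have h2 : u₂ - ub = -(1 - y₂) • (u₁ - u₂) := by
      rw [hub]
      module
    rw [hτI, hτI, h1, h2, hg₁, hg₂, inner_neg_right, real_inner_self_eq_norm_sq,
      real_inner_smul_left, real_inner_smul_left, real_inner_smul_right,
      real_inner_smul_right, real_inner_self_eq_norm_sq]
    field_simp
  · positivity
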